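/- Let $(\delta_k)_{k\geq0}$ be nonnegative reals with $[\delta]_0 = \sum_k \delta_k < \infty$ and $[\delta]_1 = \sum_k k\delta_k < \infty$, and let $(\varepsilon_j)_{j\geq0}$ be a decreasing positive sequence with $\varepsilon_0 = 1$ satisfying $\varepsilon_\ell/\varepsilon_k \leq K(1-K^{-1})^{\ell-k}$ for some $K \in (1,2]$ and all $\ell \geq k \geq 0$. Then for every $m \geq 1$, $\sum_{\ell=m}^{\infty} \sum_{k=0}^{\ell} \frac{\varepsilon_\ell}{\varepsilon_k}\delta_k \leq 9\,([\delta]_0 + [\delta]_1)\,\max\{m^{-1},\ (1-K^{-1})^{m-1}\}$. -/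

import Mathlib

open scoped ENNReal

set_option maxHeartbeats 1000000 in
/-- The double-sum estimate
`∑_{ℓ=m}^∞ ∑_{k=0}^ℓ (ε_ℓ/ε_k) δ_k ≤ 9([δ]₀ + [δ]₁) max{m⁻¹, (1-K⁻¹)^{m-1}}`
for nonnegative `δ` with finite `[δ]₀, [δ]₁` and a decreasing positive sequence `ε`
with `ε₀ = 1` satisfying the geometric bound `ε_ℓ/ε_k ≤ K(1-K⁻¹)^{ℓ-k}`, `K ∈ (1,2]`. -/
theorem stmt_8 (δ : ℕ → ℝ≥0∞)
    (h0 : ∑' k : ℕ, δ k < ∞) (h1 : ∑' k : ℕ, (k : ℝ≥0∞) * δ k < ∞)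
    (ε : ℕ → ℝ) (hpos : ∀ j, 0 < ε j) (hdec : Antitone ε) (hε0 : ε 0 = 1)
    (K : ℝ) (hK1 : 1 < K) (hK2 : K ≤ 2)
    (hgeo : ∀ k ℓ : ℕ, k ≤ ℓ → ε ℓ / ε k ≤ K * (1 - K⁻¹) ^ (ℓ - k)) :
    ∀ m : ℕ, 1 ≤ m →
      ∑' ℓ : ℕ, ∑ k ∈ Finset.range (m + ℓ + 1),
          ENNReal.ofReal (ε (m + ℓ) / ε k) * δ k ≤
        ENNReal.ofReal (9 * max ((m : ℝ)⁻¹) ((1 - K⁻¹) ^ (m - 1))) *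
          ((∑' k : ℕ, δ k) + ∑' k : ℕ, (k : ℝ≥0∞) * δ k) := by
  intro m hm
  have hK0 : (0:ℝ) < K := lt_trans one_pos hK1
  set q : ℝ := 1 - K⁻¹ with hqdef
  have hKinv0 : 0 < K⁻¹ := inv_pos.mpr hK0
  have hKinv1 : K⁻¹ < 1 := inv_lt_one_of_one_lt₀ hK1
  have hKinvhalf : (2:ℝ)⁻¹ ≤ K⁻¹ := inv_anti₀ hK0 hK2
  have hq0 : 0 < q := by rw [hqdef]; linarith
  have hq1 : q < 1 := by rw [hqdef]; linarith
  have hqhalf : q ≤ 2⁻¹ := by rw [hqdef]; linarith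
  have hm0 : (0:ℝ) < m := by exact_mod_cast hm
  set M : ℝ := max ((m:ℝ)⁻¹) (q ^ (m-1)) with hMdef
  have hMm : (m:ℝ)⁻¹ ≤ M := le_max_left _ _
  clear_value q M
  have hM0 : 0 < M := lt_of_lt_of_le (by positivity) hMm
  -- per-k bound
  have main : ∀ k : ℕ,
      (∑' ℓ : ℕ, if k < m + ℓ + 1 then ENNReal.ofReal (ε (m + ℓ) / ε k) * δ k else 0)
        ≤ ENNReal.ofReal (9 * M) * (δ k + (k : ℝ≥0∞) * δ k) := by
    intro k
    set g : ℕ → ℝ≥0∞ := fun ℓ => if k < m + ℓ + 1 then ENNReal.ofReal (ε (m + ℓ) / ε k) else 0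
      with hg
    set N := k - m with hN
    set e := max m k - k with he
    have hmN : m + N = max m k := by
      rcases le_total m k with h | h
      · rw [max_eq_right h]; omega
      · rw [max_eq_left h]; omega
    have hke : k + e = max m k := by
      rcases le_total m k with h | h
      · rw [he, max_eq_right h]; omega
      · rw [he, max_eq_left h]; omega
    have step1 : (∑' ℓ : ℕ, if k < m + ℓ + 1 then ENNReal.ofReal (ε (m + ℓ) / ε k) * δ k else 0)
        = (∑' ℓ : ℕ, g ℓ) * δ k := by
      rw [← ENNReal.tsum_mul_right]
      exact tsum_congr fun ℓ => by rw [hg]; simp only [ite_mul, zero_mul]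
    have hzero : ∀ i ∈ Finset.range N, g i = 0 := by
      intro i hi
      have hi' : i < N := Finset.mem_range.mp hi
      have : ¬ k < m + i + 1 := by omega
      simp [hg, this]
      intro h; exact absurd h (by omega)
    have hshift : ∑' ℓ, g ℓ = ∑' j, g (j + N) := by
      rw [← Summable.sum_add_tsum_nat_add' (f := g) (k := N) ENNReal.summable,
        Finset.sum_eq_zero hzero, zero_add]
    have hbound : ∀ j : ℕ,
        g (j + N) ≤ ENNReal.ofReal K * ENNReal.ofReal q ^ e * ENNReal.ofReal q ^ j := by
      intro j
      have hk : k ≤ m + (j + N) := by omega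
      have hcond : k < m + (j + N) + 1 := Nat.lt_succ_of_le hk
      have hsub : m + (j + N) - k = e + j := by omega
      have hb := hgeo k (m + (j + N)) hk
      rw [hsub] at hb
      calc g (j + N) = ENNReal.ofReal (ε (m + (j + N)) / ε k) := by rw [hg]; simp [hcond]
        _ ≤ ENNReal.ofReal (K * q ^ (e + j)) := ENNReal.ofReal_le_ofReal hb
        _ = ENNReal.ofReal K * ENNReal.ofReal q ^ e * ENNReal.ofReal q ^ j := by
            rw [pow_add, ENNReal.ofReal_mul hK0.le,
              ENNReal.ofReal_mul (pow_nonneg hq0.le e), ENNReal.ofReal_pow hq0.le,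
              ENNReal.ofReal_pow hq0.le, mul_assoc]
    have hgeo_sum : ∑' j : ℕ, (ENNReal.ofReal q) ^ j = ENNReal.ofReal K := by
      rw [ENNReal.tsum_geometric]
      have h1q : (1 : ℝ≥0∞) - ENNReal.ofReal q = ENNReal.ofReal K⁻¹ := by
        rw [← ENNReal.ofReal_one, ← ENNReal.ofReal_sub _ hq0.le]
        congr 1
        rw [hqdef]; ring
      rw [h1q, ENNReal.ofReal_inv_of_pos hK0, inv_inv]
    have hT : ∑' ℓ, g ℓ ≤ ENNReal.ofReal (K ^ 2 * q ^ e) := by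
      rw [hshift]
      calc ∑' j, g (j + N)
          ≤ ∑' j, ENNReal.ofReal K * ENNReal.ofReal q ^ e * ENNReal.ofReal q ^ j :=
            ENNReal.tsum_le_tsum hbound
        _ = ENNReal.ofReal K * ENNReal.ofReal q ^ e * ENNReal.ofReal K := by
            rw [ENNReal.tsum_mul_left, hgeo_sum]
        _ = ENNReal.ofReal (K ^ 2 * q ^ e) := by
            rw [ENNReal.ofReal_mul (by positivity), ENNReal.ofReal_pow hq0.le,
              ENNReal.ofReal_pow hK0.le]
            ring
    have hKsq : K ^ 2 ≤ 4 := by nlinarith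
    have hqe0 : (0:ℝ) ≤ q ^ e := by positivity
    have hB : K ^ 2 * q ^ e ≤ 9 * M * (1 + (k:ℝ)) := by
      have hk0 : (0:ℝ) ≤ (k:ℝ) := Nat.cast_nonneg k
      rcases le_or_gt m (2 * k) with hcase | hcase
      · -- m ≤ 2k : use q^e ≤ 1 and 4m ≤ 9(1+k)
        have hqe1 : q ^ e ≤ 1 := pow_le_one₀ hq0.le hq1.le
        have hmk : (m:ℝ) ≤ 2 * k := by exact_mod_cast hcase
        have h9 : (4:ℝ) ≤ 9 * (m:ℝ)⁻¹ * (1 + k) := by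
          rw [show (9:ℝ) * (m:ℝ)⁻¹ * (1 + k) = 9 * (1 + k) / m by ring, le_div_iff₀ hm0]
          nlinarith
        calc K ^ 2 * q ^ e ≤ 4 * 1 := by
              nlinarith [mul_le_mul hKsq hqe1 hqe0 (by norm_num : (0:ℝ) ≤ 4)]
          _ ≤ 9 * (m:ℝ)⁻¹ * (1 + k) := by linarith
          _ ≤ 9 * M * (1 + k) := by
              nlinarith [mul_le_mul_of_nonneg_right hMm (by positivity : (0:ℝ) ≤ 1 + (k:ℝ))]
      · -- 2k < m : here e = m - k ≥ (m+1)/2 and q^e ≤ m⁻¹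
        have hemk : e = m - k := by rw [he, max_eq_left (by omega)]
        have hme : m < 2 ^ e := by
          have h1 : e - 1 < 2 ^ (e - 1) := Nat.lt_two_pow_self
          have h2 : 2 ^ e = 2 * 2 ^ (e - 1) := by
            conv_lhs => rw [show e = (e - 1) + 1 by omega]
            rw [pow_succ]; ring
          have h3 : m + 1 ≤ 2 * e := by omega
          omega
        have hpow : q ^ e ≤ (m:ℝ)⁻¹ := by
          have hA : q ^ e ≤ ((2:ℝ)⁻¹) ^ e := pow_le_pow_left₀ hq0.le hqhalf e
          have hC : (m:ℝ) ≤ (2:ℝ) ^ e := by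
            have : ((m:ℕ):ℝ) ≤ ((2 ^ e : ℕ):ℝ) := by exact_mod_cast hme.le
            simpa using this
          have hD : ((2:ℝ) ^ e)⁻¹ ≤ (m:ℝ)⁻¹ := by
            apply inv_anti₀ hm0 hC
          calc q ^ e ≤ ((2:ℝ)⁻¹) ^ e := hA
            _ = ((2:ℝ) ^ e)⁻¹ := by rw [inv_pow]
            _ ≤ (m:ℝ)⁻¹ := hD
        calc K ^ 2 * q ^ e ≤ 4 * (m:ℝ)⁻¹ := by
              nlinarith [mul_le_mul hKsq hpow hqe0 (by norm_num : (0:ℝ) ≤ 4)]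
          _ ≤ 4 * M := by linarith
          _ ≤ 9 * M * (1 + k) := by nlinarith [mul_nonneg hM0.le hk0]
    calc (∑' ℓ : ℕ, if k < m + ℓ + 1 then ENNReal.ofReal (ε (m + ℓ) / ε k) * δ k else 0)
        = (∑' ℓ, g ℓ) * δ k := step1
      _ ≤ ENNReal.ofReal (K ^ 2 * q ^ e) * δ k := mul_le_mul_left hT _
      _ ≤ ENNReal.ofReal (9 * M * (1 + k)) * δ k :=
          mul_le_mul_left (ENNReal.ofReal_le_ofReal hB) _
      _ = ENNReal.ofReal (9 * M) * (δ k + (k : ℝ≥0∞) * δ k) := by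
          rw [ENNReal.ofReal_mul (by positivity), mul_assoc]
          congr 1
          rw [show ENNReal.ofReal (1 + (k:ℝ)) = 1 + (k:ℝ≥0∞) by
            rw [ENNReal.ofReal_add zero_le_one (Nat.cast_nonneg k), ENNReal.ofReal_one,
              ENNReal.ofReal_natCast]]
          rw [add_mul, one_mul]
  have key : ∀ ℓ, (∑ k ∈ Finset.range (m + ℓ + 1), ENNReal.ofReal (ε (m + ℓ) / ε k) * δ k)
      = ∑' k : ℕ, (if k < m + ℓ + 1 then ENNReal.ofReal (ε (m + ℓ) / ε k) * δ k else 0) := by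
    intro ℓ
    rw [tsum_eq_sum (s := Finset.range (m + ℓ + 1)) (fun b hb => if_neg (by simpa using hb))]
    exact Finset.sum_congr rfl fun k hk => (if_pos (Finset.mem_range.mp hk)).symm
  calc ∑' ℓ : ℕ, ∑ k ∈ Finset.range (m + ℓ + 1), ENNReal.ofReal (ε (m + ℓ) / ε k) * δ k
      = ∑' ℓ : ℕ, ∑' k : ℕ,
          (if k < m + ℓ + 1 then ENNReal.ofReal (ε (m + ℓ) / ε k) * δ k else 0) :=
        tsum_congr key
    _ = ∑' k : ℕ, ∑' ℓ : ℕ,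
          (if k < m + ℓ + 1 then ENNReal.ofReal (ε (m + ℓ) / ε k) * δ k else 0) :=
        ENNReal.tsum_comm
    _ ≤ ∑' k : ℕ, ENNReal.ofReal (9 * M) * (δ k + (k : ℝ≥0∞) * δ k) :=
        ENNReal.tsum_le_tsum main
    _ = ENNReal.ofReal (9 * M) * ((∑' k : ℕ, δ k) + ∑' k : ℕ, (k : ℝ≥0∞) * δ k) := by
        rw [ENNReal.tsum_mul_left, ENNReal.tsum_add]
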